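/- If ν is odd and ν ≥ 2k + 3, the graph G = ((ν−1)/2 − k)K₁ ∨ K_{(ν+1)/2+k} is k½-extendable with α(G) = (ν−1)/2 − k. -/

import Mathlib

open SimpleGraph

/-- `G` has a perfect matching. -/
def HasPM {W : Type*} (G : SimpleGraph W) : Prop :=
  ∃ M : G.Subgraph, M.IsPerfectMatching

/-- `G` is `k`-extendable: `G` is connected, has a matching of size `k`, and every
matching of size `k` extends to a perfect matching. -/
def IsKExtendable {W : Type*} (G : SimpleGraph W) (k : ℕ) : Prop :=
  G.Connected ∧
  (∃ M : G.Subgraph, M.IsMatching ∧ M.verts.ncard = 2 * k) ∧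
  ∀ M : G.Subgraph, M.IsMatching → M.verts.ncard = 2 * k →
    ∃ P : G.Subgraph, P.IsPerfectMatching ∧ M ≤ P

/-- `G` is `n`-factor-critical: deleting any `n` vertices leaves a graph with a
perfect matching. -/
def IsNFactorCritical {W : Type*} (G : SimpleGraph W) (n : ℕ) : Prop :=
  ∀ S : Finset W, S.card = n → HasPM (G.induce ((↑S : Set W)ᶜ))

/-- The independence number of `G`. -/
noncomputable def indepNum {W : Type*} (G : SimpleGraph W) : ℕ :=
  sSup {n | ∃ s : Finset W, (∀ u ∈ s, ∀ v ∈ s, ¬ G.Adj u v) ∧ s.card = n}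

/-- The number of odd connected components of `G`. -/
noncomputable def numOddComponents {W : Type*} (G : SimpleGraph W) : ℕ :=
  Nat.card {c : G.ConnectedComponent // Odd (Nat.card c.supp)}

/-- `G` is `k½`-extendable: `G` is connected and for every vertex `v`, `G - v` has a
matching of size `k` and every matching of size `k` in `G - v` extends to a perfect
matching of `G - v`. -/
def IsHalfExtendable {W : Type*} (G : SimpleGraph W) (k : ℕ) : Prop :=
  G.Connected ∧
  ∀ v : W,
    (∃ M : (G.induce ({v} : Set W)ᶜ).Subgraph, M.IsMatching ∧ M.verts.ncard = 2 * k) ∧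
    ∀ M : (G.induce ({v} : Set W)ᶜ).Subgraph, M.IsMatching → M.verts.ncard = 2 * k →
      ∃ P : (G.induce ({v} : Set W)ᶜ).Subgraph, P.IsPerfectMatching ∧ M ≤ P

/-- The join of two graphs: all edges between the two vertex classes are added. -/
def graphJoin {α β : Type*} (G : SimpleGraph α) (H : SimpleGraph β) :
    SimpleGraph (α ⊕ β) :=
  SimpleGraph.fromRel (fun a b =>
    match a, b with
    | Sum.inl u, Sum.inl v => G.Adj u v
    | Sum.inr u, Sum.inr v => H.Adj u v
    | _, _ => True)

/-- The disjoint union of two graphs. -/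
def graphUnion {α β : Type*} (G : SimpleGraph α) (H : SimpleGraph β) :
    SimpleGraph (α ⊕ β) :=
  SimpleGraph.fromRel (fun a b =>
    match a, b with
    | Sum.inl u, Sum.inl v => G.Adj u v
    | Sum.inr u, Sum.inr v => H.Adj u v
    | _, _ => False)

/-- The join `G ∨ K₁`: one new vertex joined to every vertex of `G`. -/
def joinK1 {W : Type*} (G : SimpleGraph W) : SimpleGraph (W ⊕ Unit) :=
  graphJoin G (⊥ : SimpleGraph Unit)

/-- `G` is the join of a graph on `n` vertices with the disjoint union of two cliques
of size `m` (intrinsic formulation of `G = G₀ ∨ (K_m ∪ K_m)`). -/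
def IsJoinTwoCliques {W : Type*} [Fintype W] [DecidableEq W] (G : SimpleGraph W) (n m : ℕ) : Prop :=
  ∃ S A B : Finset W,
    Disjoint S A ∧ Disjoint S B ∧ Disjoint A B ∧ S ∪ A ∪ B = Finset.univ ∧
    S.card = n ∧ A.card = m ∧ B.card = m ∧
    (∀ u ∈ A, ∀ v ∈ A, u ≠ v → G.Adj u v) ∧
    (∀ u ∈ B, ∀ v ∈ B, u ≠ v → G.Adj u v) ∧
    (∀ u ∈ A, ∀ v ∈ B, ¬ G.Adj u v) ∧
    (∀ u ∈ S, ∀ v ∈ A ∪ B, G.Adj u v)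

/-- `A` induces in `G` the disjoint union of two factor-critical connected components,
each of size at least `minSize`. -/
def TwoFCComponents {W : Type*} [DecidableEq W] (G : SimpleGraph W) (A : Finset W) (minSize : ℕ) : Prop :=
  ∃ B C : Finset W,
    Disjoint B C ∧ B ∪ C = A ∧ minSize ≤ B.card ∧ minSize ≤ C.card ∧
    (∀ u ∈ B, ∀ v ∈ C, ¬ G.Adj u v) ∧
    (G.induce (↑B : Set W)).Connected ∧ (G.induce (↑C : Set W)).Connected ∧
    IsNFactorCritical (G.induce (↑B : Set W)) 1 ∧
    IsNFactorCritical (G.induce (↑C : Set W)) 1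

noncomputable def equivOfNcardEq {α : Type*} {s t : Set α} (hs : s.Finite) (ht : t.Finite)
    (h : s.ncard = t.ncard) : s ≃ t := by
  haveI := hs.to_subtype; haveI := ht.to_subtype
  exact (Finite.card_eq.mp (by rwa [Nat.card_coe_set_eq, Nat.card_coe_set_eq])).some

lemma matching_from_pairing {V : Type*} {H : SimpleGraph V} {s t : Set V}
    (hs : s.Finite) (ht : t.Finite) (hd : Disjoint s t) (hcard : s.ncard = t.ncard)
    (hadj : ∀ u ∈ s, ∀ v ∈ t, H.Adj u v) :
    ∃ N : H.Subgraph, N.verts = s ∪ t ∧ N.IsMatching := by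
  have e := equivOfNcardEq hs ht hcard
  exact SimpleGraph.Subgraph.IsMatching.exists_of_disjoint_sets_of_equiv hd e
    (fun v => hadj v v.2 (e v) (e v).2)

lemma matching_from_clique {V : Type*} {H : SimpleGraph V} (X : Set V) (hfin : X.Finite)
    (hclique : ∀ u ∈ X, ∀ v ∈ X, u ≠ v → H.Adj u v) (heven : Even X.ncard) :
    ∃ N : H.Subgraph, N.verts = X ∧ N.IsMatching := by
  obtain ⟨r, hr⟩ := heven
  obtain ⟨s, hsX, hs⟩ := Set.exists_subset_card_eq (show r ≤ X.ncard by omega)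
  have htcard : (X \ s).ncard = r := by
    rw [Set.ncard_diff hsX (hfin.subset hsX)]; omega
  have hd : Disjoint s (X \ s) := Set.disjoint_left.mpr fun x hx h2 => h2.2 hx
  obtain ⟨N, hNv, hNm⟩ := matching_from_pairing (hfin.subset hsX) (hfin.diff (t := s)) hd (by omega)
    (fun u hu v hv => hclique u (hsX hu) v hv.1 (fun h => hv.2 (h ▸ hu)))
  exact ⟨N, by rw [hNv, Set.union_diff_cancel hsX], hNm⟩

lemma extend_matching {V : Type*} [Finite V] {H : SimpleGraph V} (L : Set V)
    (hadj : ∀ u v : V, u ≠ v → (u ∉ L ∨ v ∉ L) → H.Adj u v)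
    {M : H.Subgraph} (hM : M.IsMatching)
    (hcard : (M.vertsᶜ ∩ L).ncard ≤ (M.vertsᶜ ∩ Lᶜ).ncard)
    (heven : Even (M.vertsᶜ : Set V).ncard) :
    ∃ P : H.Subgraph, P.IsPerfectMatching ∧ M ≤ P := by
  set A := M.vertsᶜ ∩ L with hA
  set B := M.vertsᶜ ∩ Lᶜ with hB
  have hABd : Disjoint A B := by
    exact Set.disjoint_left.mpr fun x hx hx2 => hx2.2 hx.2
  have hABu : A ∪ B = M.vertsᶜ := Set.inter_union_compl _ _
  obtain ⟨B1, hB1B, hB1⟩ := Set.exists_subset_card_eq hcard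
  obtain ⟨N1, hN1v, hN1⟩ := matching_from_pairing (Set.toFinite A) (Set.toFinite B1)
    (hABd.mono_right hB1B) hB1.symm
    (fun u hu v hv => hadj u v (fun h => hABd.ne_of_mem hu (hB1B hv) h)
      (Or.inr (hB1B hv).2))
  have hsum : A.ncard + B.ncard = (M.vertsᶜ : Set V).ncard := by
    rw [← hABu, Set.ncard_union_eq hABd (Set.toFinite A) (Set.toFinite B)]
  have hCeven : Even (B \ B1).ncard := by
    rw [Set.ncard_diff hB1B (Set.toFinite B1), hB1]
    rw [Nat.even_iff] at heven ⊢; omega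
  obtain ⟨N2, hN2v, hN2⟩ := matching_from_clique (B \ B1) (Set.toFinite _)
    (fun u hu v hv hne => hadj u v hne (Or.inl hu.1.2)) hCeven
  have hN12 : (N1 ⊔ N2).IsMatching := hN1.sup hN2 (by
    rw [hN1.support_eq_verts, hN2.support_eq_verts, hN1v, hN2v]
    exact Set.disjoint_union_left.mpr
      ⟨hABd.mono_right Set.diff_subset, Set.disjoint_left.mpr fun x hx h2 => h2.2 hx⟩)
  have hNverts : (N1 ⊔ N2).verts = M.vertsᶜ := by
    rw [SimpleGraph.Subgraph.verts_sup, hN1v, hN2v, Set.union_assoc,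
      Set.union_diff_cancel hB1B, hABu]
  refine ⟨M ⊔ (N1 ⊔ N2), ⟨hM.sup hN12 ?_, fun v => ?_⟩, le_sup_left⟩
  · rw [hM.support_eq_verts, hN12.support_eq_verts, hNverts]
    exact disjoint_compl_right
  · rw [SimpleGraph.Subgraph.verts_sup, hNverts, Set.union_compl_self]
    trivial

lemma matched_card_le {V : Type*} [Finite V] {H : SimpleGraph V} {M : H.Subgraph}
    (hM : M.IsMatching) (L : Set V) (hL : ∀ u v : V, H.Adj u v → u ∈ L → v ∉ L) :
    (M.verts ∩ L).ncard ≤ (M.verts ∩ Lᶜ).ncard := by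
  classical
  choose f hf1 hf2 using fun (u : V) (hu : u ∈ M.verts) => (hM hu)
  set g : V → V := fun u => if h : u ∈ M.verts then f u h else u with hg
  refine Set.ncard_le_ncard_of_injOn g (fun u hu => ?_) (fun u hu w hw hne => ?_)
    (Set.toFinite _)
  · have : g u = f u hu.1 := dif_pos hu.1
    rw [this]
    exact ⟨(hf1 u hu.1).snd_mem, hL u _ (M.adj_sub (hf1 u hu.1)) hu.2⟩
  · have h1 : M.Adj u (g u) := by rw [hg]; simpa [hu.1] using hf1 u hu.1
    have h2 : M.Adj w (g w) := by rw [hg]; simpa [hw.1] using hf1 w hw.1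
    have h3 : M.Adj (g u) u := h1.symm
    have h4 : M.Adj (g u) w := hne ▸ h2.symm
    obtain ⟨_, _, huniq⟩ := hM h1.snd_mem
    exact (huniq u h3).trans (huniq w h4).symm

lemma ncard_preimage_val {W : Type*} (S T : Set W) :
    (Subtype.val ⁻¹' T : Set S).ncard = (S ∩ T).ncard := by
  rw [← Set.ncard_image_of_injective _ Subtype.val_injective, Subtype.image_preimage_coe]

lemma joinAdj {a b : ℕ} (x y : Fin a ⊕ Fin b) :
    (graphJoin (⊥ : SimpleGraph (Fin a)) (⊤ : SimpleGraph (Fin b))).Adj x y ↔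
      x ≠ y ∧ (x ∉ Set.range Sum.inl ∨ y ∉ Set.range Sum.inl) := by
  cases x <;> cases y <;> simp [graphJoin, SimpleGraph.fromRel_adj] <;> aesop


/-- For odd ν ≥ 2k + 3, the graph ((ν−1)/2 − k)K₁ ∨ K_{(ν+1)/2+k} is k½-extendable
with independence number exactly (ν−1)/2 − k. -/
theorem join_indep_clique_halfExtendable (ν k : ℕ)
    (hodd : Odd ν) (hν : 2 * k + 3 ≤ ν) :
    IsHalfExtendable
        (graphJoin (⊥ : SimpleGraph (Fin ((ν - 1) / 2 - k)))
          (⊤ : SimpleGraph (Fin ((ν + 1) / 2 + k)))) k ∧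
      _root_.indepNum
        (graphJoin (⊥ : SimpleGraph (Fin ((ν - 1) / 2 - k)))
          (⊤ : SimpleGraph (Fin ((ν + 1) / 2 + k)))) = (ν - 1) / 2 - k := by
  obtain ⟨m, hm⟩ := hodd
  set a := (ν - 1) / 2 - k with ha'
  set b := (ν + 1) / 2 + k with hb'
  have ha : a = m - k := by omega
  have hb : b = m + 1 + k := by omega
  have hmk : k + 1 ≤ m := by omega
  have hab : b = a + (2 * k + 1) := by omega
  have ha1 : 1 ≤ a := by omega
  set W := Fin a ⊕ Fin b with hW
  set G := graphJoin (⊥ : SimpleGraph (Fin a)) (⊤ : SimpleGraph (Fin b)) with hG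
  have hrl : (Set.range (Sum.inl : Fin a → W)).ncard = a := by
    rw [← Set.image_univ, Set.ncard_image_of_injective _ Sum.inl_injective, Set.ncard_univ]
    simp
  have hrr : (Set.range (Sum.inr : Fin b → W)).ncard = b := by
    rw [← Set.image_univ, Set.ncard_image_of_injective _ Sum.inr_injective, Set.ncard_univ]
    simp
  have hcardW : Nat.card W = a + b := by simp [hW]
  have hr0 : 0 < b := by omega
  have hconn : G.Connected := by
    rw [SimpleGraph.connected_iff]
    have key : ∀ x : W, G.Reachable x (Sum.inr ⟨0, hr0⟩) := by
      intro x
      by_cases hx : x = Sum.inr ⟨0, hr0⟩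
      · exact hx ▸ SimpleGraph.Reachable.refl _
      · exact SimpleGraph.Adj.reachable ((joinAdj _ _).mpr ⟨hx, Or.inr (by simp)⟩)
    exact ⟨fun x y => (key x).trans (key y).symm, ⟨Sum.inr ⟨0, hr0⟩⟩⟩
  constructor
  · refine ⟨hconn, fun v => ?_⟩
    set L : Set ↥(({v} : Set W)ᶜ) := Subtype.val ⁻¹' (Set.range Sum.inl) with hLdef
    have hadj : ∀ x y : ↥(({v} : Set W)ᶜ), x ≠ y → (x ∉ L ∨ y ∉ L) →
        (G.induce ({v} : Set W)ᶜ).Adj x y := by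
      intro x y hne h
      exact (joinAdj x.val y.val).mpr ⟨Subtype.coe_injective.ne hne, h⟩
    have hL' : ∀ x y : ↥(({v} : Set W)ᶜ), (G.induce ({v} : Set W)ᶜ).Adj x y →
        x ∈ L → y ∉ L := by
      intro x y hxy hx hy
      have h2 := (joinAdj x.val y.val).mp hxy
      rcases h2.2 with h | h
      · exact h hx
      · exact h hy
    have hNL : L.ncard = (({v}ᶜ : Set W) ∩ Set.range Sum.inl).ncard :=
      ncard_preimage_val _ _
    have hNR : Lᶜ.ncard = (({v}ᶜ : Set W) ∩ Set.range Sum.inr).ncard := by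
      have : Lᶜ = (Subtype.val ⁻¹' (Set.range Sum.inr) : Set ↥(({v} : Set W)ᶜ)) := by
        rw [hLdef, ← Set.preimage_compl, Set.compl_range_inl]
      rw [this, ncard_preimage_val]
    have hcards : (L.ncard = a - 1 ∧ Lᶜ.ncard = b) ∨ (L.ncard = a ∧ Lᶜ.ncard = b - 1) := by
      rw [hNL, hNR]
      cases v with
      | inl u =>
        left
        constructor
        · rw [Set.inter_comm, ← Set.diff_eq,
            Set.ncard_diff_singleton_of_mem (Set.mem_range_self u), hrl]
        · rw [Set.inter_comm, ← Set.diff_eq,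
            Set.diff_singleton_eq_self (by simp), hrr]
      | inr w =>
        right
        constructor
        · rw [Set.inter_comm, ← Set.diff_eq,
            Set.diff_singleton_eq_self (by simp), hrl]
        · rw [Set.inter_comm, ← Set.diff_eq,
            Set.ncard_diff_singleton_of_mem (Set.mem_range_self w), hrr]
    have hLle : L.ncard + 2 * k ≤ Lᶜ.ncard := by rcases hcards with ⟨h1, h2⟩ | ⟨h1, h2⟩ <;> omega
    have htotL : L.ncard + Lᶜ.ncard = Nat.card ↥(({v} : Set W)ᶜ) :=
      Set.ncard_add_ncard_compl L
    have htotval : L.ncard + Lᶜ.ncard = a + b - 1 := by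
      rcases hcards with ⟨h1, h2⟩ | ⟨h1, h2⟩ <;> omega
    constructor
    · obtain ⟨X, hXsub, hX⟩ := Set.exists_subset_card_eq (show 2 * k ≤ Lᶜ.ncard by omega)
      obtain ⟨N, hNv, hNm⟩ := matching_from_clique X (Set.toFinite X)
        (fun x hx y hy hne => hadj x y hne (Or.inl (hXsub hx)))
        (by rw [hX]; exact even_two_mul k)
      exact ⟨N, hNm, by rw [hNv, hX]⟩
    · intro M hM hM2k
      have hxy : (M.verts ∩ L).ncard ≤ (M.verts ∩ Lᶜ).ncard := matched_card_le hM L hL'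
      have hdisj1 : Disjoint (M.verts ∩ L) (M.verts ∩ Lᶜ) :=
        Set.disjoint_left.mpr fun x hx hx2 => hx2.2 hx.2
      have hsum : (M.verts ∩ L).ncard + (M.verts ∩ Lᶜ).ncard = 2 * k := by
        rw [← Set.ncard_union_eq hdisj1 (Set.toFinite _) (Set.toFinite _),
          Set.inter_union_compl, hM2k]
      have hsplit : ∀ T : Set ↥(({v} : Set W)ᶜ),
          (M.verts ∩ T).ncard + (M.vertsᶜ ∩ T).ncard = T.ncard := by
        intro T
        rw [← Set.ncard_union_eq
          (Set.disjoint_left.mpr fun x hx hx2 => hx2.1 hx.1) (Set.toFinite _) (Set.toFinite _)]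
        congr 1
        ext x
        by_cases hx : x ∈ M.verts <;> simp [hx]
      have hsL := hsplit L
      have hsR := hsplit Lᶜ
      have hcount : (M.vertsᶜ ∩ L).ncard ≤ (M.vertsᶜ ∩ Lᶜ).ncard := by omega
      have htot2 : M.verts.ncard + M.vertsᶜ.ncard = Nat.card ↥(({v} : Set W)ᶜ) :=
        Set.ncard_add_ncard_compl _
      have habm : a + b = 2 * m + 1 := by omega
      exact extend_matching L hadj hM hcount (Nat.even_iff.mpr (by omega))
  · have hset : {n | ∃ s : Finset W, (∀ u ∈ s, ∀ v ∈ s, ¬ G.Adj u v) ∧ s.card = n}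
        = Set.Iic a := by
      ext n
      simp only [Set.mem_setOf_eq, Set.mem_Iic]
      constructor
      · rintro ⟨s, hind, rfl⟩
        by_cases hr : ∃ x ∈ s, x ∈ Set.range (Sum.inr : Fin b → W)
        · obtain ⟨x, hxs, w, rfl⟩ := hr
          have hsub : s ⊆ {Sum.inr w} := by
            intro y hy
            rw [Finset.mem_singleton]
            by_contra hne
            exact hind y hy _ hxs ((joinAdj _ _).mpr ⟨hne, Or.inr (by simp)⟩)
          calc s.card ≤ 1 := by simpa using Finset.card_le_card hsub
            _ ≤ a := ha1
        · push_neg at hr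
          set f : W → Fin a := Sum.elim id (fun _ => ⟨0, ha1⟩) with hf
          have hinj : Set.InjOn f s := by
            intro x hx y hy hxy
            match x, y with
            | Sum.inl u, Sum.inl u' => exact congrArg Sum.inl (by simpa [hf] using hxy)
            | Sum.inr u, _ => exact absurd ⟨u, rfl⟩ (hr _ hx)
            | Sum.inl u, Sum.inr u' => exact absurd ⟨u', rfl⟩ (hr _ hy)
          calc s.card = (s.image f).card := (Finset.card_image_of_injOn hinj).symm
            _ ≤ Fintype.card (Fin a) := Finset.card_le_univ _
            _ = a := Fintype.card_fin a
      · intro hn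
        obtain ⟨t, _, ht⟩ := Finset.exists_subset_card_eq (s := (Finset.univ : Finset (Fin a))) (n := n)
          (by simpa using hn)
        refine ⟨t.image Sum.inl, ?_, by
          rw [Finset.card_image_of_injective _ Sum.inl_injective, ht]⟩
        intro x hx y hy hadj
        obtain ⟨u, _, rfl⟩ := Finset.mem_image.mp hx
        obtain ⟨u', _, rfl⟩ := Finset.mem_image.mp hy
        have := (joinAdj _ _).mp hadj
        rcases this.2 with h | h
        · exact h ⟨u, rfl⟩
        · exact h ⟨u', rfl⟩
    rw [_root_.indepNum, hset, csSup_Iic]
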